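/- Let q = r^2 where r is an odd prime power with r ≡ 1 (mod 4). Let s be an even integer with 1 ≤ s ≤ (r+1)/2, let t be an integer with 1 ≤ t ≤ (r−1)/2, and set n = s(r−1) + t(r+1). Then there exists a q-ary [n, n/2] MDS Euclidean self-dual code, i.e., an F_q-subspace C of F_q^n of dimension n/2 with minimum Hamming distance n/2 + 1 satisfying C = C^⊥. -/

import Mathlib

open Finset

variable {F : Type*} [Field F]

/-- The Euclidean dual code `C^⊥ = { u : ∀ c ∈ C, ∑ i, u i * c i = 0 }`. -/
def dualCode {n : ℕ} (C : Submodule F (Fin n → F)) : Submodule F (Fin n → F) where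
  carrier := { u | ∀ c ∈ C, ∑ i, u i * c i = 0 }
  add_mem' := by
    intro u w hu hw c hc
    simp only [Set.mem_setOf_eq] at hu hw
    simp [Pi.add_apply, add_mul, Finset.sum_add_distrib, hu c hc, hw c hc]
  zero_mem' := by intro c hc; simp
  smul_mem' := by
    intro r u hu c hc
    simp only [Set.mem_setOf_eq] at hu
    simp [Pi.smul_apply, smul_eq_mul, mul_assoc, ← Finset.mul_sum, hu c hc]

/-- `C` has minimum Hamming distance `d`. -/
def IsMinDist [DecidableEq F] {n : ℕ} (C : Submodule F (Fin n → F)) (d : ℕ) : Prop :=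
  (∀ c ∈ C, c ≠ 0 → d ≤ hammingNorm c) ∧ ∃ c ∈ C, c ≠ 0 ∧ hammingNorm c = d

open Polynomial

section LagrangeAux

variable {ι : Type*} [DecidableEq ι]

lemma coeff_lagrange_basis_top (s : Finset ι) (v : ι → F)
    {i : ι} (hi : i ∈ s) :
    (Lagrange.basis s v i).coeff (#s - 1) = Lagrange.nodalWeight s v i := by
  have hb : Lagrange.basis s v i
      = C (Lagrange.nodalWeight s v i) * Lagrange.nodal (s.erase i) v := by
    rw [Lagrange.basis_eq_prod_sub_inv_mul_nodal_div hi,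
      ← Lagrange.nodal_erase_eq_nodal_div hi]
  rw [hb, coeff_C_mul]
  have hdeg : (Lagrange.nodal (s.erase i) v).natDegree = #s - 1 := by
    rw [Lagrange.natDegree_nodal, card_erase_of_mem hi]
  rw [← hdeg, Polynomial.Monic.coeff_natDegree Lagrange.nodal_monic, mul_one]

lemma sum_nodalWeight_mul_pow (s : Finset ι) (v : ι → F) (hvs : Set.InjOn v s)
    (m : ℕ) (hm : m + 2 ≤ #s) :
    ∑ i ∈ s, Lagrange.nodalWeight s v i * v i ^ m = 0 := by
  have hdeg : ((X : F[X]) ^ m).degree < #s := by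
    rw [degree_X_pow]
    exact_mod_cast lt_of_lt_of_le (by omega : m < m + 2) hm
  have h := Lagrange.eq_interpolate hvs hdeg
  have h2 := congrArg (fun p => Polynomial.coeff p (#s - 1)) h
  simp only [Lagrange.interpolate_apply] at h2
  rw [finset_sum_coeff] at h2
  have h3 : ∀ i ∈ s, (C (eval (v i) ((X:F[X]) ^ m)) * Lagrange.basis s v i).coeff (#s - 1)
      = v i ^ m * Lagrange.nodalWeight s v i := by
    intro i hi
    rw [coeff_C_mul, coeff_lagrange_basis_top s v hi, eval_pow, eval_X]
  rw [Finset.sum_congr rfl h3] at h2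
  have h4 : ((X : F[X]) ^ m).coeff (#s - 1) = 0 := by
    rw [coeff_X_pow, if_neg (by omega)]
  rw [h4] at h2
  rw [show ∑ i ∈ s, Lagrange.nodalWeight s v i * v i ^ m
      = ∑ i ∈ s, v i ^ m * Lagrange.nodalWeight s v i
    from Finset.sum_congr rfl fun i _ => mul_comm _ _]
  exact h2.symm

end LagrangeAux

section GRS

variable [Fintype F] [DecidableEq F]

lemma grs_main {n : ℕ} (hn2 : 2 ≤ n) (hne : Even n) (a : Fin n → F)
    (ha : Function.Injective a)
    (hsq : ∀ i : Fin n, IsSquare (∏ j ∈ univ.erase i, (a i - a j))) :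
    ∃ C : Submodule F (Fin n → F),
      Module.finrank F C = n / 2 ∧ IsMinDist C (n / 2 + 1) ∧ C = dualCode C := by
  classical
  obtain ⟨c2, hc2⟩ := hne
  have hhalf : n / 2 * 2 = n := by omega
  set k := n / 2 with hk
  have hk1 : 1 ≤ k := by omega
  have hkn : k ≤ n := by omega
  have haInj : Set.InjOn a ((univ : Finset (Fin n)) : Set (Fin n)) :=
    fun x _ y _ h => ha h
  set u : Fin n → F := fun i => Lagrange.nodalWeight univ a i with hu
  have hu_ne : ∀ i, u i ≠ 0 := fun i => Lagrange.nodalWeight_ne_zero haInj (mem_univ i)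
  have hu_sq : ∀ i, IsSquare (u i) := by
    intro i
    have h1 : u i = (∏ j ∈ univ.erase i, (a i - a j))⁻¹ := by
      rw [hu]
      simp only [Lagrange.nodalWeight, ← prod_inv_distrib]
    rw [h1]
    obtain ⟨w, hw⟩ := hsq i
    exact ⟨w⁻¹, by rw [hw, mul_inv]⟩
  choose v hv using hu_sq
  have hv_ne : ∀ i, v i ≠ 0 := fun i h => hu_ne i (by rw [hv i, h, mul_zero])
  let L : F[X] →ₗ[F] (Fin n → F) :=
    { toFun := fun f => fun i => v i * eval (a i) f
      map_add' := fun f g => by funext i; simp [mul_add]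
      map_smul' := fun c f => by funext i; simp; ring }
  let L' := L.comp (Submodule.subtype (degreeLT F k))
  have hL'app : ∀ f : degreeLT F k, ∀ i, L' f i = v i * eval (a i) (f : F[X]) :=
    fun f i => rfl
  have hL'inj : Function.Injective L' := by
    rw [← LinearMap.ker_eq_bot]
    apply LinearMap.ker_eq_bot'.mpr
    rintro ⟨f, hf⟩ h0
    have hev : ∀ i ∈ (univ : Finset (Fin n)), eval (a i) f = 0 := by
      intro i _
      have h1 := congrFun h0 i
      rw [hL'app ⟨f, hf⟩ i] at h1
      rcases mul_eq_zero.mp h1 with h | h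
      · exact absurd h (hv_ne i)
      · exact h
    have hdeg : f.degree < (#(univ : Finset (Fin n)) : ℕ) := by
      refine lt_of_lt_of_le (mem_degreeLT.mp hf) ?_
      simp only [card_univ, Fintype.card_fin]
      exact_mod_cast hkn
    exact Subtype.ext (Polynomial.eq_zero_of_degree_lt_of_eval_index_eq_zero univ haInj hdeg hev)
  set CC : Submodule F (Fin n → F) := LinearMap.range L' with hCC
  have hrank : Module.finrank F CC = k := by
    rw [hCC, LinearMap.finrank_range_of_inj hL'inj,
      (Polynomial.degreeLTEquiv F k).finrank_eq, Module.finrank_fin_fun]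
  have horthm : ∀ m : ℕ, m + 2 ≤ n → ∑ i, u i * a i ^ m = 0 := by
    intro m hm
    have := sum_nodalWeight_mul_pow (univ : Finset (Fin n)) a haInj m
      (by simpa using hm)
    simpa using this
  have horth : ∀ f g : F[X], f ∈ degreeLT F k → g ∈ degreeLT F k →
      ∑ i, (v i * eval (a i) f) * (v i * eval (a i) g) = 0 := by
    intro f g hf hg
    have hstep : ∀ i : Fin n, (v i * eval (a i) f) * (v i * eval (a i) g)
        = u i * eval (a i) (f * g) := by
      intro i; rw [eval_mul, hv i]; ring
    rw [Finset.sum_congr rfl (fun i _ => hstep i)]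
    by_cases hfg : f * g = 0
    · simp [hfg]
    · have hf' : f ≠ 0 := left_ne_zero_of_mul hfg
      have hg' : g ≠ 0 := right_ne_zero_of_mul hfg
      have h1 : f.natDegree < k := (natDegree_lt_iff_degree_lt hf').mpr (mem_degreeLT.mp hf)
      have h2 : g.natDegree < k := (natDegree_lt_iff_degree_lt hg').mpr (mem_degreeLT.mp hg)
      have hlt : (f*g).natDegree < n - 1 := by
        rw [natDegree_mul hf' hg']; omega
      have hev : ∀ i : Fin n, eval (a i) (f*g) = ∑ m ∈ range (n-1), (f*g).coeff m * a i ^ m :=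
        fun i => eval_eq_sum_range' hlt (a i)
      rw [Finset.sum_congr rfl fun i _ => by rw [hev i]]
      have hswap : ∑ i : Fin n, u i * ∑ m ∈ range (n-1), (f*g).coeff m * a i ^ m
          = ∑ m ∈ range (n-1), (f*g).coeff m * ∑ i : Fin n, u i * a i ^ m := by
        simp_rw [Finset.mul_sum]
        rw [Finset.sum_comm]
        apply Finset.sum_congr rfl
        intro m _
        apply Finset.sum_congr rfl
        intro i _
        ring
      rw [hswap]
      apply Finset.sum_eq_zero
      intro m hm
      rw [horthm m (by have := mem_range.mp hm; omega), mul_zero]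
  have hle : CC ≤ dualCode CC := by
    rintro x ⟨⟨f, hf⟩, rfl⟩
    rintro c ⟨⟨g, hg⟩, rfl⟩
    exact horth f g hf hg
  let B : LinearMap.BilinForm F (Fin n → F) := LinearMap.mk₂ F (fun x y => ∑ i, x i * y i)
      (fun x x' y => by simp [add_mul, Finset.sum_add_distrib])
      (fun c x y => by simp [Finset.mul_sum, mul_assoc])
      (fun x y y' => by simp [mul_add, Finset.sum_add_distrib])
      (fun c x y => by simp only [Pi.smul_apply, smul_eq_mul, Finset.mul_sum]
                       exact Finset.sum_congr rfl fun i _ => by ring)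
  have hBapp : ∀ x y : Fin n → F, B x y = ∑ i, x i * y i := fun x y => rfl
  have hBrefl : B.IsRefl := by
    intro x y hxy
    rw [hBapp] at hxy ⊢
    rw [show ∑ i, y i * x i = ∑ i, x i * y i from Finset.sum_congr rfl fun i _ => mul_comm _ _]
    exact hxy
  have hBnd : B.Nondegenerate := by
    refine (LinearMap.IsRefl.nondegenerate_iff_separatingLeft hBrefl).mpr ?_
    intro x hx
    funext i
    have h1 := hx (Pi.single i 1)
    rw [hBapp] at h1
    simpa [Pi.single_apply, mul_ite] using h1
  have hdual_eq : dualCode CC = B.orthogonal CC := by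
    ext x
    constructor
    · intro hx
      intro c hc
      have h1 := hx c hc
      show B c x = 0
      rw [hBapp]
      rw [show ∑ i, c i * x i = ∑ i, x i * c i from Finset.sum_congr rfl fun i _ => mul_comm _ _]
      exact h1
    · intro hx
      intro c hc
      have h1 : B c x = 0 := hx c hc
      rw [hBapp] at h1
      rw [show ∑ i, x i * c i = ∑ i, c i * x i from Finset.sum_congr rfl fun i _ => mul_comm _ _]
      exact h1
  have hfd : Module.finrank F (dualCode CC) = n - k := by
    rw [hdual_eq, LinearMap.BilinForm.finrank_orthogonal hBnd, hrank,
      Module.finrank_fin_fun]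
  have heq : CC = dualCode CC :=
    Submodule.eq_of_le_of_finrank_le hle (by rw [hfd, hrank]; omega)
  refine ⟨CC, hrank, ⟨?_, ?_⟩, heq⟩
  · -- lower bound on distance
    rintro c ⟨⟨f, hf⟩, rfl⟩ hc0
    have hf0 : f ≠ 0 := by
      intro h
      apply hc0
      funext i
      rw [hL'app ⟨f, hf⟩ i]
      show v i * eval (a i) f = (0 : Fin n → F) i
      rw [h, eval_zero, mul_zero, Pi.zero_apply]
    set Z := univ.filter (fun i : Fin n => eval (a i) f = 0) with hZ
    have hndeg : f.natDegree ≤ k - 1 := by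
      have := (natDegree_lt_iff_degree_lt hf0).mpr (mem_degreeLT.mp hf); omega
    have hZcard : #Z ≤ k - 1 := by
      have hmap : ∀ i ∈ Z, a i ∈ f.roots.toFinset := by
        intro i hi
        rw [Multiset.mem_toFinset, mem_roots hf0]
        exact (mem_filter.mp hi).2
      calc #Z ≤ #f.roots.toFinset :=
            card_le_card_of_injOn a hmap (fun x _ y _ h => ha h)
        _ ≤ Multiset.card f.roots := f.roots.toFinset_card_le
        _ ≤ f.natDegree := f.card_roots'
        _ ≤ k - 1 := hndeg
    have hZn : #Z + #(univ.filter (fun i : Fin n => ¬ (eval (a i) f = 0))) = n := by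
      have hcomp := Finset.card_filter_add_card_filter_not
        (s := (univ : Finset (Fin n))) (p := fun i => eval (a i) f = 0)
      rwa [card_univ, Fintype.card_fin] at hcomp
    have hset : univ.filter (fun i => L' ⟨f, hf⟩ i ≠ 0)
        = univ.filter (fun i : Fin n => ¬ (eval (a i) f = 0)) := by
      apply Finset.filter_congr
      intro i _
      rw [hL'app ⟨f, hf⟩ i]
      simp [hv_ne i]
    have hnorm : hammingNorm (L' ⟨f, hf⟩)
        = #(univ.filter (fun i : Fin n => ¬ (eval (a i) f = 0))) := by
      rw [← hset]; rfl
    rw [hnorm]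
    omega
  · -- existence of minimum weight codeword
    have hk1n : k - 1 ≤ n := by omega
    set T : Finset (Fin n) := (univ : Finset (Fin (k-1))).map (Fin.castLEEmb hk1n) with hT
    have hTcard : #T = k - 1 := by
      rw [hT, card_map, card_univ, Fintype.card_fin]
    set f₀ : F[X] := Lagrange.nodal T a with hf₀
    have hf₀mem : f₀ ∈ degreeLT F k := by
      rw [mem_degreeLT, hf₀, Lagrange.degree_nodal, hTcard]
      exact_mod_cast (by omega : k - 1 < k)
    set c₀ := L' ⟨f₀, hf₀mem⟩ with hc₀
    have hc₀app : ∀ i, c₀ i = v i * ∏ j ∈ T, (a i - a j) := by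
      intro i
      rw [hc₀, hL'app ⟨f₀, hf₀mem⟩ i]
      simp [hf₀, Lagrange.eval_nodal]
    have hzero : ∀ i, c₀ i = 0 ↔ i ∈ T := by
      intro i
      rw [hc₀app i]
      constructor
      · intro h
        rcases mul_eq_zero.mp h with h | h
        · exact absurd h (hv_ne i)
        · obtain ⟨j, hj, hj0⟩ := prod_eq_zero_iff.mp h
          have : i = j := ha (sub_eq_zero.mp hj0)
          rwa [this]
      · intro h
        rw [prod_eq_zero h (by simp), mul_zero]
    obtain ⟨i₀, hi₀⟩ : ∃ i, i ∉ T := by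
      by_contra h
      push_neg at h
      have : T = univ := eq_univ_iff_forall.mpr h
      rw [this, card_univ, Fintype.card_fin] at hTcard
      omega
    have hc₀ne : c₀ ≠ 0 := by
      intro h
      exact hi₀ ((hzero i₀).mp (by rw [h]; rfl))
    refine ⟨c₀, ⟨⟨f₀, hf₀mem⟩, rfl⟩, hc₀ne, ?_⟩
    have hset : univ.filter (fun i => c₀ i ≠ 0) = univ.filter (fun i : Fin n => ¬ (i ∈ T)) := by
      apply Finset.filter_congr
      intro i _
      rw [ne_eq, hzero i]
    have hmemT : univ.filter (fun i : Fin n => i ∈ T) = T := by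
      simp
    have hcomp := Finset.card_filter_add_card_filter_not
      (s := (univ : Finset (Fin n))) (p := fun i : Fin n => i ∈ T)
    rw [hmemT, card_univ, Fintype.card_fin] at hcomp
    have hnorm : hammingNorm c₀ = #(univ.filter (fun i : Fin n => ¬ (i ∈ T))) := by
      rw [← hset]; rfl
    rw [hnorm]
    omega

end GRS

/-- Product of `X - wζ^k` over all `m`-th roots of unity `ζ^k`. -/
lemma prod_fin_X_sub_C {m : ℕ} (hm : 0 < m) {ζ : F} (hζ : IsPrimitiveRoot ζ m)
    (w : F) (hw : w ≠ 0) :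
    ∏ k : Fin m, ((X : F[X]) - C (w * ζ ^ (k : ℕ))) = X ^ m - C (w ^ m) := by
  classical
  have base : ∏ k ∈ Finset.range m, ((X : F[X]) - C (ζ ^ k)) = X ^ m - 1 := by
    rw [Polynomial.X_pow_sub_one_eq_prod hm hζ]
    apply Finset.prod_nbij (fun k => ζ ^ k)
    · intro k hk
      rw [Polynomial.mem_nthRootsFinset hm, ← pow_mul, mul_comm k m, pow_mul, hζ.pow_eq_one,
        one_pow]
    · intro k hk k' hk' h
      exact hζ.pow_inj (mem_range.mp hk) (mem_range.mp hk') h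
    · haveI : NeZero m := ⟨hm.ne'⟩
      intro ξ hξ
      obtain ⟨i, hi, rfl⟩ := hζ.eq_pow_of_pow_eq_one ((Polynomial.mem_nthRootsFinset hm (1 : F)).mp hξ)
      exact ⟨i, mem_range.mpr hi, rfl⟩
    · intro k hk; rfl
  have happ := congrArg (Polynomial.aeval ((C w⁻¹) * X : F[X])) base
  rw [map_prod, map_sub, map_pow, map_one] at happ
  simp only [map_sub, Polynomial.aeval_X, Polynomial.aeval_C, Polynomial.algebraMap_eq] at happ
  have step : ∀ k : ℕ, (X : F[X]) - C (w * ζ ^ k) = C w * ((C w⁻¹ * X) - C (ζ ^ k)) := by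
    intro k
    rw [mul_sub, ← mul_assoc, ← C_mul, mul_inv_cancel₀ hw, C_1, one_mul, ← C_mul]
  rw [Fin.prod_univ_eq_prod_range (fun k => (X : F[X]) - C (w * ζ ^ k)) m]
  calc ∏ k ∈ Finset.range m, ((X : F[X]) - C (w * ζ ^ k))
      = ∏ k ∈ Finset.range m, (C w * ((C w⁻¹ * X) - C (ζ ^ k))) :=
        Finset.prod_congr rfl fun k _ => step k
    _ = C w ^ m * ∏ k ∈ Finset.range m, ((C w⁻¹ * X) - C (ζ ^ k)) := by
        rw [Finset.prod_mul_distrib, Finset.prod_const, card_range]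
    _ = C w ^ m * ((C w⁻¹ * X) ^ m - 1) := by rw [happ]
    _ = X ^ m - C (w ^ m) := by
        rw [mul_sub, mul_one, mul_pow, ← mul_assoc, ← mul_pow, ← C_mul,
          mul_inv_cancel₀ hw, C_1, one_pow, one_mul, ← C_pow]

lemma derivative_finset_prod {ι : Type*} [DecidableEq ι] (s : Finset ι) (f : ι → F[X]) :
    Polynomial.derivative (∏ b ∈ s, f b)
      = ∑ b ∈ s, (∏ c ∈ s.erase b, f c) * Polynomial.derivative (f b) := by
  classical
  induction s using Finset.induction_on with
  | empty => simp
  | @insert i s' hnotmem ih =>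
    rw [prod_insert hnotmem, derivative_mul, ih, sum_insert hnotmem, erase_insert hnotmem]
    congr 1
    · exact mul_comm _ _
    · rw [Finset.mul_sum]
      apply Finset.sum_congr rfl
      intro b hb
      have hbi : b ≠ i := fun h => hnotmem (h ▸ hb)
      rw [Finset.erase_insert_of_ne hbi.symm,
        prod_insert (fun h => hnotmem (mem_of_mem_erase h))]
      ring

lemma aux_add_mul_inj (M x x' y y' : ℕ) (hx : x < M) (hx' : x' < M)
    (h : x + M * y = x' + M * y') : x = x' ∧ y = y' := by
  have h1 : (x + M * y) % M = x := by rw [Nat.add_mul_mod_self_left, Nat.mod_eq_of_lt hx]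
  have h2 : (x' + M * y') % M = x' := by rw [Nat.add_mul_mod_self_left, Nat.mod_eq_of_lt hx']
  have hxx : x = x' := by rw [← h1, h, h2]
  refine ⟨hxx, ?_⟩
  have hM : 0 < M := lt_of_le_of_lt (Nat.zero_le x) hx
  apply Nat.eq_of_mul_eq_mul_left hM
  omega

lemma prod_erase_sum_inl {M : Type*} [CommMonoid M] {σ τ : Type*} [Fintype σ] [Fintype τ]
    [DecidableEq σ] [DecidableEq τ] (h : σ ⊕ τ → M) (i : σ) :
    ∏ z ∈ (univ : Finset (σ ⊕ τ)).erase (Sum.inl i), h z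
      = (∏ i' ∈ (univ : Finset σ).erase i, h (Sum.inl i')) * ∏ j' : τ, h (Sum.inr j') := by
  classical
  have hset : (univ : Finset (σ ⊕ τ)).erase (Sum.inl i)
      = (((univ : Finset σ).erase i).map ⟨Sum.inl, Sum.inl_injective⟩)
        ∪ ((univ : Finset τ).map ⟨Sum.inr, Sum.inr_injective⟩) := by
    ext z
    cases z <;> simp [eq_comm]
  rw [hset, Finset.prod_union (by
    rw [Finset.disjoint_left]
    rintro z hz1 hz2
    simp only [Finset.mem_map, Function.Embedding.coeFn_mk] at hz1 hz2
    obtain ⟨x1, _, rfl⟩ := hz1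
    obtain ⟨x2, _, h2⟩ := hz2
    exact Sum.inl_ne_inr h2.symm )]
  rw [Finset.prod_map, Finset.prod_map]
  rfl

lemma prod_erase_sum_inr {M : Type*} [CommMonoid M] {σ τ : Type*} [Fintype σ] [Fintype τ]
    [DecidableEq σ] [DecidableEq τ] (h : σ ⊕ τ → M) (j : τ) :
    ∏ z ∈ (univ : Finset (σ ⊕ τ)).erase (Sum.inr j), h z
      = (∏ i' : σ, h (Sum.inl i')) * ∏ j' ∈ (univ : Finset τ).erase j, h (Sum.inr j') := by
  classical
  have hset : (univ : Finset (σ ⊕ τ)).erase (Sum.inr j)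
      = (((univ : Finset σ)).map ⟨Sum.inl, Sum.inl_injective⟩)
        ∪ (((univ : Finset τ).erase j).map ⟨Sum.inr, Sum.inr_injective⟩) := by
    ext z
    cases z <;> simp [eq_comm]
  rw [hset, Finset.prod_union (by
    rw [Finset.disjoint_left]
    rintro z hz1 hz2
    simp only [Finset.mem_map, Function.Embedding.coeFn_mk] at hz1 hz2
    obtain ⟨x1, _, rfl⟩ := hz1
    obtain ⟨x2, _, h2⟩ := hz2
    exact Sum.inl_ne_inr h2.symm )]
  rw [Finset.prod_map, Finset.prod_map]
  rfl


variable [Fintype F] [DecidableEq F]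

/-- Elements of the subfield `F_r` (i.e. `(r-1)`-th roots of unity) are squares in `F_{r²}`. -/
lemma chi_subfield (r : ℕ) (hr5 : 5 ≤ r) (hr1 : r % 4 = 1)
    (hcard : Fintype.card F = r ^ 2) (hchar2 : ringChar F ≠ 2)
    {x : F} (hx0 : x ≠ 0) (hx : x ^ (r - 1) = 1) : quadraticChar F x = 1 := by
  apply (quadraticChar_one_iff_isSquare hx0).mpr
  rw [FiniteField.isSquare_iff hchar2 hx0]
  have hh : Fintype.card F / 2 = (r - 1) * ((r + 1) / 2) := by
    rw [hcard]
    obtain ⟨k, hk⟩ : ∃ k, r = 4 * k + 1 := ⟨r / 4, by omega⟩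
    subst hk
    have e1 : (4 * k + 1 + 1) / 2 = 2 * k + 1 := by omega
    have e2 : (4 * k + 1) ^ 2 = ((4 * k + 1 - 1) * (2 * k + 1)) * 2 + 1 := by
      have : 4 * k + 1 - 1 = 4 * k := by omega
      rw [this]; ring
    rw [e1]
    omega
  rw [hh, pow_mul, hx, one_pow]

/-- Elements of the order-`(r+1)` subgroup are squares in `F_{r²}`. -/
lemma chi_cyclic_side (r : ℕ) (hr5 : 5 ≤ r) (hr1 : r % 4 = 1)
    (hcard : Fintype.card F = r ^ 2) (hchar2 : ringChar F ≠ 2)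
    {x : F} (hx0 : x ≠ 0) (hx : x ^ (r + 1) = 1) : quadraticChar F x = 1 := by
  apply (quadraticChar_one_iff_isSquare hx0).mpr
  rw [FiniteField.isSquare_iff hchar2 hx0]
  have hh : Fintype.card F / 2 = (r + 1) * ((r - 1) / 2) := by
    rw [hcard]
    obtain ⟨k, hk⟩ : ∃ k, r = 4 * k + 1 := ⟨r / 4, by omega⟩
    subst hk
    have e1 : (4 * k + 1 - 1) / 2 = 2 * k := by omega
    have e2 : (4 * k + 1) ^ 2 = ((4 * k + 1 + 1) * (2 * k)) * 2 + 1 := by ring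
    rw [e1]
    omega
  rw [hh, pow_mul, hx, one_pow]

/-- The core computation: `(γ^m - 1)^((q-1)/2) = -(-1)^m` for `γ` of order `r+1`. -/
lemma chi_gamma_core (r : ℕ) (hr5 : 5 ≤ r) (hr1 : r % 4 = 1)
    (hcard : Fintype.card F = r ^ 2)
    (hfrob : ∀ x y : F, (x - y) ^ r = x ^ r - y ^ r)
    {γ : F} (hγ : IsPrimitiveRoot γ (r + 1)) (m : ℕ) (hne : γ ^ m ≠ 1) :
    (γ ^ m - 1) ^ (Fintype.card F / 2) = -((-1 : F) ^ m) := by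
  set z := γ ^ m with hz
  have hz1 : z ^ (r + 1) = 1 := by
    rw [hz, ← pow_mul, mul_comm m (r+1), pow_mul, hγ.pow_eq_one, one_pow]
  have hz0 : z ≠ 0 := by
    intro h
    rw [h, zero_pow (by omega : r + 1 ≠ 0)] at hz1
    exact zero_ne_one hz1
  have hw0 : z - 1 ≠ 0 := sub_ne_zero.mpr hne
  have hzr : z ^ r * z = 1 := by rw [← pow_succ]; exact hz1
  have hzinv : z ^ r = z⁻¹ := by
    have h := congrArg (· * z⁻¹) hzr
    simpa [mul_assoc, mul_inv_cancel₀ hz0] using h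
  have hwr : (z - 1) ^ r = -z⁻¹ * (z - 1) := by
    rw [hfrob z 1, one_pow, hzinv]
    field_simp
    ring
  have hwr1 : (z - 1) ^ (r - 1) = -z⁻¹ := by
    have h : (z - 1) ^ (r - 1) * (z - 1) = -z⁻¹ * (z - 1) := by
      rw [← pow_succ, show r - 1 + 1 = r by omega]
      exact hwr
    exact mul_right_cancel₀ hw0 h
  have hhalf : Fintype.card F / 2 = (r + 1) * ((r - 1) / 2) := by
    rw [hcard]
    obtain ⟨k, hk⟩ : ∃ k, r = 4 * k + 1 := ⟨r / 4, by omega⟩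
    subst hk
    have e1 : (4 * k + 1 - 1) / 2 = 2 * k := by omega
    have e2 : (4 * k + 1) ^ 2 = ((4 * k + 1 + 1) * (2 * k)) * 2 + 1 := by ring
    rw [e1]
    omega
  have hde : Even ((r - 1) / 2) := by
    obtain ⟨k, hk⟩ : ∃ k, r = 4 * k + 1 := ⟨r / 4, by omega⟩
    exact ⟨k, by omega⟩
  have hwr2 : (z - 1) ^ (r + 1) = -z⁻¹ * (z - 1) ^ 2 := by
    rw [pow_succ, hwr]; ring
  have hd2 : 2 * ((r - 1) / 2) = r - 1 := by omega
  have hghalf : γ ^ ((r + 1) / 2) = -1 := by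
    have hy2 : (γ ^ ((r + 1) / 2)) * (γ ^ ((r + 1) / 2)) = 1 := by
      rw [← pow_add, show (r + 1) / 2 + (r + 1) / 2 = r + 1 by omega, hγ.pow_eq_one]
    rcases mul_self_eq_one_iff.mp hy2 with h | h
    · exact absurd h (hγ.pow_ne_one_of_pos_of_lt (by omega) (by omega))
    · exact h
  have hzhalf : z ^ ((r - 1) / 2 + 1) = (-1 : F) ^ m := by
    have : (r - 1) / 2 + 1 = (r + 1) / 2 := by omega
    rw [this, hz, ← pow_mul, mul_comm m ((r+1)/2), pow_mul, hghalf]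
  calc (z - 1) ^ (Fintype.card F / 2)
      = ((z - 1) ^ (r + 1)) ^ ((r - 1) / 2) := by rw [hhalf, pow_mul]
    _ = (-z⁻¹) ^ ((r - 1) / 2) * ((z - 1) ^ 2) ^ ((r - 1) / 2) := by rw [hwr2, mul_pow]
    _ = (z⁻¹) ^ ((r - 1) / 2) * (z - 1) ^ (r - 1) := by
        rw [hde.neg_pow, ← pow_mul, hd2]
    _ = (z⁻¹) ^ ((r - 1) / 2) * -z⁻¹ := by rw [hwr1]
    _ = -((-1 : F) ^ m) := by
        have h1 : ((-1 : F) ^ m)⁻¹ = (-1 : F) ^ m := by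
          rcases Nat.even_or_odd m with h | h
          · rw [h.neg_one_pow, inv_one]
          · rw [h.neg_one_pow, inv_neg, inv_one]
        rw [← h1, ← hzhalf, pow_succ, mul_inv, ← inv_pow]
        ring

set_option maxHeartbeats 1000000 in
lemma exists_good_points (r : ℕ) (hr : IsPrimePow r) (hrodd : Odd r) (hr1 : r % 4 = 1)
    (hcard : Fintype.card F = r ^ 2)
    (s t : ℕ) (hs1 : 1 ≤ s) (hs2 : s ≤ (r + 1) / 2) (hse : Even s)
    (ht1 : 1 ≤ t) (ht2 : t ≤ (r - 1) / 2) :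
    ∃ a : Fin (s * (r - 1) + t * (r + 1)) → F, Function.Injective a ∧
      ∀ i, IsSquare (∏ j ∈ univ.erase i, (a i - a j)) := by
  classical
  obtain ⟨pp, vv, hppP, hvv, hpr⟩ := hr
  have hppN : pp.Prime := Nat.prime_iff.mpr hppP
  have hr2 : 2 ≤ r := by
    rw [← hpr]
    calc 2 ≤ pp := hppN.two_le
      _ ≤ pp ^ vv := Nat.le_self_pow (by omega) pp
  have hr5 : 5 ≤ r := by
    rcases hrodd with ⟨c, hc⟩
    omega
  obtain ⟨kk, hkk, hkk1⟩ : ∃ kk, r = 4 * kk + 1 ∧ 1 ≤ kk := ⟨r / 4, by omega⟩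
  have hrodd2 : r % 2 = 1 := by omega
  have h25 : 25 ≤ r ^ 2 := by nlinarith
  have hr2odd : r ^ 2 % 2 = 1 := by rw [Nat.pow_mod, hrodd2]
  -- characteristic
  obtain ⟨nn, hchprime, hchcard⟩ := FiniteField.card F (ringChar F)
  have hppchar : pp = ringChar F := by
    have h1 : pp ∣ Fintype.card F := by
      rw [hcard, ← hpr, ← pow_mul]
      exact dvd_pow_self pp (by omega)
    rw [hchcard] at h1
    exact (Nat.prime_dvd_prime_iff_eq hppN hchprime).mp (hppN.dvd_of_dvd_pow h1)
  have hrF : (r : F) = 0 := by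
    rw [← hpr, Nat.cast_pow]
    have h0 : (pp : F) = 0 := by
      rw [hppchar]
      exact CharP.cast_eq_zero F (ringChar F)
    rw [h0, zero_pow (by omega)]
  have hppdvd : pp ∣ r := by rw [← hpr]; exact dvd_pow_self pp (by omega)
  have hchar2 : ringChar F ≠ 2 := by
    intro h2
    rw [hppchar, h2] at hppdvd
    obtain ⟨d, hd⟩ := hppdvd
    omega
  have hneg1F : (-1 : F) ≠ 1 := by
    intro h
    have h2 : ((2 : ℕ) : F) = 0 := by push_cast; linear_combination (-1 : F) * h
    have h3 := (CharP.cast_eq_zero_iff F (ringChar F) 2).mp h2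
    exact hchar2 ((Nat.prime_dvd_prime_iff_eq hchprime Nat.prime_two).mp h3)
  haveI hCharPpp : CharP F pp := by rw [hppchar]; exact ringChar.charP F
  haveI : ExpChar F pp := ExpChar.prime hppN
  have hfrob : ∀ x y : F, (x - y) ^ r = x ^ r - y ^ r := by
    intro x y
    rw [← hpr]
    exact sub_pow_expChar_pow x y vv
  -- generator
  have hcardu : Fintype.card Fˣ = r ^ 2 - 1 := by rw [Fintype.card_units, hcard]
  obtain ⟨g, hg⟩ := IsCyclic.exists_generator (α := Fˣ)
  have horderg : orderOf g = r ^ 2 - 1 := by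
    rw [orderOf_eq_card_of_forall_mem_zpowers hg, Nat.card_eq_fintype_card, hcardu]
  set A : F := ((g : Fˣ) : F) with hA
  have hA0 : A ≠ 0 := Units.ne_zero g
  have hordA : orderOf A = r ^ 2 - 1 := by rw [hA, orderOf_units, horderg]
  have hQfac : r ^ 2 - 1 = (r - 1) * (r + 1) := by
    have h2 : 1 ≤ r ^ 2 := Nat.one_le_pow _ _ (by omega)
    zify [show 1 ≤ r by omega, h2]
    ring
  have hApow : ∀ e e' : ℕ, A ^ e = A ^ e' ↔ e ≡ e' [MOD r ^ 2 - 1] := by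
    intro e e'
    have key : (g ^ e = g ^ e') ↔ e ≡ e' [MOD r ^ 2 - 1] := by
      rw [pow_eq_pow_iff_modEq, horderg]
    rw [← key]
    constructor
    · intro h
      exact Units.ext (by rw [Units.val_pow_eq_pow_val, Units.val_pow_eq_pow_val]; exact h)
    · intro h
      have := congrArg Units.val h
      rwa [Units.val_pow_eq_pow_val, Units.val_pow_eq_pow_val] at this
  have hfinA : IsOfFinOrder A := by rw [← orderOf_pos_iff, hordA]; omega
  set β : F := A ^ (r + 1) with hβ
  set γ : F := A ^ (r - 1) with hγ
  have hβ0 : β ≠ 0 := pow_ne_zero _ hA0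
  have hγ0 : γ ≠ 0 := pow_ne_zero _ hA0
  have hordβ : orderOf β = r - 1 := by
    rw [hβ, hfinA.orderOf_pow, hordA, hQfac,
      Nat.gcd_eq_right ⟨r - 1, by ring⟩, Nat.mul_div_cancel _ (by omega)]
  have hordγ : orderOf γ = r + 1 := by
    rw [hγ, hfinA.orderOf_pow, hordA, hQfac,
      Nat.gcd_eq_right (dvd_mul_right _ _), Nat.mul_div_cancel_left _ (by omega)]
  have hβprim : IsPrimitiveRoot β (r - 1) := by rw [← hordβ]; exact IsPrimitiveRoot.orderOf β
  have hγprim : IsPrimitiveRoot γ (r + 1) := by rw [← hordγ]; exact IsPrimitiveRoot.orderOf γ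
  have hγr1 : γ ^ (r + 1) = 1 := hγprim.pow_eq_one
  have hβr1 : β ^ (r - 1) = 1 := hβprim.pow_eq_one
  -- quadratic character facts
  have hchiA : quadraticChar F A = -1 := by
    apply quadraticChar_neg_one_iff_not_isSquare.mpr
    rintro ⟨y, hy⟩
    have hy0 : y ≠ 0 := by rintro rfl; exact hA0 (by rw [hy, mul_zero])
    have hev : (r ^ 2 - 1) / 2 * 2 = r ^ 2 - 1 := by omega
    have h1 : A ^ ((r ^ 2 - 1) / 2) = 1 := by
      rw [hy, ← sq, ← pow_mul, mul_comm 2 _, hev]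
      have := FiniteField.pow_card_sub_one_eq_one y hy0
      rwa [hcard] at this
    have h2 := orderOf_dvd_of_pow_eq_one h1
    rw [hordA] at h2
    have := Nat.le_of_dvd (by omega) h2
    omega
  have hchiApow : ∀ e : ℕ, quadraticChar F (A ^ e) = (-1 : ℤ) ^ e := fun e => by
    rw [map_pow, hchiA]
  have hchi_neg1 : quadraticChar F (-1 : F) = 1 := by
    apply (quadraticChar_one_iff_isSquare (neg_ne_zero.mpr one_ne_zero)).mpr
    apply FiniteField.isSquare_neg_one_iff.mpr
    rw [hcard, Nat.pow_mod, hr1]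
    norm_num
  have hchival : ∀ x : F, x ≠ 0 →
      ((x ^ (Fintype.card F / 2) = 1 → quadraticChar F x = 1) ∧
       (x ^ (Fintype.card F / 2) = -1 → quadraticChar F x = -1)) := by
    intro x hx
    constructor
    · intro h
      exact (quadraticChar_one_iff_isSquare hx).mpr ((FiniteField.isSquare_iff hchar2 hx).mpr h)
    · intro h
      apply quadraticChar_neg_one_iff_not_isSquare.mpr
      intro hsq
      rw [(FiniteField.isSquare_iff hchar2 hx).mp hsq] at h
      exact hneg1F h.symm
  have hgcore : ∀ m : ℕ, γ ^ m ≠ 1 → quadraticChar F (γ ^ m - 1) = -((-1 : ℤ) ^ m) := by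
    intro m hm
    have hx0' : γ ^ m - 1 ≠ 0 := sub_ne_zero.mpr hm
    have hc := chi_gamma_core r hr5 hr1 hcard hfrob hγprim m hm
    rcases Nat.even_or_odd m with hpar | hpar
    · have h1 : -((-1 : F) ^ m) = -1 := by rw [hpar.neg_one_pow]
      have h2 : -((-1 : ℤ) ^ m) = -1 := by rw [hpar.neg_one_pow]
      rw [h2]
      exact (hchival _ hx0').2 (by rw [hc, h1])
    · have h1 : -((-1 : F) ^ m) = 1 := by rw [hpar.neg_one_pow]; ring
      have h2 : -((-1 : ℤ) ^ m) = 1 := by rw [hpar.neg_one_pow]; ring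
      rw [h2]
      exact (hchival _ hx0').1 (by rw [hc, h1])
  have hEvenr1 : Even (r - 1) := ⟨(r - 1) / 2, by omega⟩
  have hchiγpow : ∀ b : ℕ, quadraticChar F (γ ^ b) = 1 := by
    intro b
    have h1 : γ ^ b = A ^ ((r - 1) * b) := by rw [hγ, pow_mul]
    rw [h1, hchiApow]
    exact Even.neg_one_pow (hEvenr1.mul_right b)
  have hgdiff0 : ∀ a b : ℕ, b ≤ a → γ ^ a ≠ γ ^ b →
      quadraticChar F (γ ^ a - γ ^ b) = -((-1 : ℤ) ^ (a + b)) := by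
    intro a b hba hne
    have key : γ ^ a - γ ^ b = γ ^ b * (γ ^ (a - b) - 1) := by
      rw [mul_sub, mul_one, ← pow_add, Nat.add_sub_cancel' hba]
    have hne' : γ ^ (a - b) ≠ 1 := by
      intro h
      apply hne
      have := key
      rw [h, sub_self, mul_zero] at this
      exact sub_eq_zero.mp this
    rw [key, map_mul, hchiγpow, one_mul, hgcore _ hne']
    congr 1
    rcases Nat.even_or_odd (a + b) with h | h
    · have h' : Even (a - b) := by
        rcases h with ⟨c, hc⟩; exact ⟨a - c, by omega⟩
      rw [h.neg_one_pow, h'.neg_one_pow]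
    · have h' : Odd (a - b) := by
        rcases h with ⟨c, hc⟩
        exact ⟨(a - b - 1) / 2, by omega⟩
      rw [h.neg_one_pow, h'.neg_one_pow]
  have hgdiff : ∀ a b : ℕ, γ ^ a ≠ γ ^ b →
      quadraticChar F (γ ^ a - γ ^ b) = -((-1 : ℤ) ^ (a + b)) := by
    intro a b hne
    rcases le_total b a with hba | hab
    · exact hgdiff0 a b hba hne
    · have h1 : γ ^ a - γ ^ b = (-1) * (γ ^ b - γ ^ a) := by ring
      rw [h1, map_mul, hchi_neg1, one_mul, hgdiff0 b a hab (Ne.symm hne), Nat.add_comm b a]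
  have hβr : β ^ r = β := by
    rw [show r = (r - 1) + 1 by omega, pow_add, hβr1, one_mul, pow_one]
  have hbdiff : ∀ a b : ℕ, β ^ a ≠ β ^ b → quadraticChar F (β ^ a - β ^ b) = 1 := by
    intro a b hne
    have hx0' : β ^ a - β ^ b ≠ 0 := sub_ne_zero.mpr hne
    have hxr : (β ^ a - β ^ b) ^ r = β ^ a - β ^ b := by
      rw [hfrob, pow_right_comm β a r, hβr, pow_right_comm β b r, hβr]
    have hxr1 : (β ^ a - β ^ b) ^ (r - 1) = 1 := by
      have h : (β ^ a - β ^ b) ^ (r - 1) * (β ^ a - β ^ b)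
          = 1 * (β ^ a - β ^ b) := by
        rw [← pow_succ, show r - 1 + 1 = r by omega, hxr, one_mul]
      exact mul_right_cancel₀ hx0' h
    exact chi_subfield r hr5 hr1 hcard hchar2 hx0' hxr1
  -- inequality helpers for exponents
  have hβne : ∀ a b : ℕ, a % 2 ≠ b % 2 → β ^ a ≠ β ^ b := by
    have haux : ∀ a b : ℕ, b ≤ a → a % 2 ≠ b % 2 → β ^ a ≠ β ^ b := by
      intro a b hba hpar h
      have hcan : β ^ (a - b) * β ^ b = 1 * β ^ b := by
        rw [← pow_add, Nat.sub_add_cancel hba, one_mul, h]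
      have h1 : β ^ (a - b) = 1 := mul_right_cancel₀ (pow_ne_zero _ hβ0) hcan
      have h2 := (IsPrimitiveRoot.pow_eq_one_iff_dvd hβprim _).mp h1
      obtain ⟨c, hc⟩ := h2
      obtain ⟨w, hw⟩ : ∃ w, r - 1 = 2 * w := ⟨(r - 1) / 2, by omega⟩
      have h3 : a - b = 2 * (w * c) := by rw [hc, hw]; ring
      omega
    intro a b hpar
    rcases le_total b a with hba | hab
    · exact haux a b hba hpar
    · exact fun h => haux b a hab (Ne.symm hpar) h.symm
  have hγne : ∀ a b : ℕ, a % 2 ≠ b % 2 → γ ^ a ≠ γ ^ b := by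
    have haux : ∀ a b : ℕ, b ≤ a → a % 2 ≠ b % 2 → γ ^ a ≠ γ ^ b := by
      intro a b hba hpar h
      have hcan : γ ^ (a - b) * γ ^ b = 1 * γ ^ b := by
        rw [← pow_add, Nat.sub_add_cancel hba, one_mul, h]
      have h1 : γ ^ (a - b) = 1 := mul_right_cancel₀ (pow_ne_zero _ hγ0) hcan
      have h2 := (IsPrimitiveRoot.pow_eq_one_iff_dvd hγprim _).mp h1
      obtain ⟨c, hc⟩ := h2
      obtain ⟨w, hw⟩ : ∃ w, r + 1 = 2 * w := ⟨(r + 1) / 2, by omega⟩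
      have h3 : a - b = 2 * (w * c) := by rw [hc, hw]; ring
      omega
    intro a b hpar
    rcases le_total b a with hba | hab
    · exact haux a b hba hpar
    · exact fun h => haux b a hab (Ne.symm hpar) h.symm
  -- the points
  set n := s * (r - 1) + t * (r + 1) with hn
  let e : Fin n ≃ (Fin s × Fin (r - 1)) ⊕ (Fin t × Fin (r + 1)) :=
    finSumFinEquiv.symm.trans (Equiv.sumCongr finProdFinEquiv.symm finProdFinEquiv.symm)
  set E : (Fin s × Fin (r - 1)) ⊕ (Fin t × Fin (r + 1)) → ℕ :=
    Sum.elim (fun ik => (2 * (ik.1 : ℕ) + 1) + (r + 1) * (ik.2 : ℕ))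
             (fun jl => 2 * (jl.1 : ℕ) + (r - 1) * (jl.2 : ℕ)) with hE
  set pt : (Fin s × Fin (r - 1)) ⊕ (Fin t × Fin (r + 1)) → F := fun z => A ^ E z with hpt
  have hbs : ∀ i : Fin s, 2 * (i : ℕ) + 1 ≤ r := by
    intro i; have := i.isLt; omega
  have hbt : ∀ j : Fin t, 2 * (j : ℕ) + 2 ≤ r - 1 := by
    intro j; have := j.isLt; omega
  have hrplus_even : ∀ c : ℕ, ∃ d, (r + 1) * c = 2 * d :=
    fun c => ⟨(2 * kk + 1) * c, by rw [hkk]; ring⟩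
  have hrminus_even : ∀ c : ℕ, ∃ d, (r - 1) * c = 2 * d :=
    fun c => ⟨2 * kk * c, by rw [hkk]; simp; ring⟩
  have hEbound : ∀ z, E z < r ^ 2 - 1 := by
    rintro (⟨i, k⟩ | ⟨j, l⟩)
    · have h1 := hbs i
      have h2 : (k : ℕ) ≤ r - 2 := by have := k.isLt; omega
      have h3 : (r + 1) * (k : ℕ) ≤ (r + 1) * (r - 2) := Nat.mul_le_mul_left _ h2
      have hx : r + 2 ≤ r ^ 2 := by nlinarith
      have h4 : (r + 1) * (r - 2) = r ^ 2 - r - 2 := by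
        zify [show 2 ≤ r by omega, show r ≤ r ^ 2 by omega, show 2 ≤ r ^ 2 - r by omega]
        ring
      simp only [hE, Sum.elim_inl]
      omega
    · have h1 := hbt j
      have h2 : (l : ℕ) ≤ r := by have := l.isLt; omega
      have h3 : (r - 1) * (l : ℕ) ≤ (r - 1) * r := Nat.mul_le_mul_left _ h2
      have hx : r + 2 ≤ r ^ 2 := by nlinarith
      have h4 : (r - 1) * r = r ^ 2 - r := by
        zify [show 1 ≤ r by omega, show r ≤ r ^ 2 by omega]
        ring
      simp only [hE, Sum.elim_inr]
      omega
  have hptinj : Function.Injective pt := by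
    intro z z' hzz
    have hmod : E z ≡ E z' [MOD r ^ 2 - 1] := (hApow _ _).mp hzz
    have hEE : E z = E z' := by
      have b1 := hEbound z
      have b2 := hEbound z'
      unfold Nat.ModEq at hmod
      rwa [Nat.mod_eq_of_lt b1, Nat.mod_eq_of_lt b2] at hmod
    rcases z with ⟨i, k⟩ | ⟨j, l⟩ <;> rcases z' with ⟨i', k'⟩ | ⟨j', l'⟩
    · simp only [hE, Sum.elim_inl] at hEE
      obtain ⟨hx, hy⟩ := aux_add_mul_inj (r + 1) _ _ _ _
        (by have := hbs i; omega) (by have := hbs i'; omega) hEE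
      have h1 : i = i' := Fin.ext (by omega)
      have h2 : k = k' := Fin.ext hy
      rw [h1, h2]
    · exfalso
      simp only [hE, Sum.elim_inl, Sum.elim_inr] at hEE
      obtain ⟨d1, hd1⟩ := hrplus_even (k : ℕ)
      obtain ⟨d2, hd2⟩ := hrminus_even (l' : ℕ)
      omega
    · exfalso
      simp only [hE, Sum.elim_inl, Sum.elim_inr] at hEE
      obtain ⟨d1, hd1⟩ := hrplus_even (k' : ℕ)
      obtain ⟨d2, hd2⟩ := hrminus_even (l : ℕ)
      omega
    · simp only [hE, Sum.elim_inr] at hEE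
      obtain ⟨hx, hy⟩ := aux_add_mul_inj (r - 1) _ _ _ _
        (by have := hbt j; omega) (by have := hbt j'; omega) hEE
      have h1 : j = j' := Fin.ext (by omega)
      have h2 : l = l' := Fin.ext hy
      rw [h1, h2]
  set aa : Fin n → F := fun i => pt (e i) with haa
  refine ⟨aa, fun i1 i2 h12 => e.injective (hptinj h12), ?_⟩
  intro i0
  -- blocks
  set gblk : Fin s ⊕ Fin t → F[X] :=
    Sum.elim (fun i' => X ^ (r - 1) - C (γ ^ (2 * (i' : ℕ) + 1)))
             (fun j' => X ^ (r + 1) - C (β ^ (2 * (j' : ℕ)))) with hgblk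
  have hnodal : Lagrange.nodal univ aa = ∏ b : Fin s ⊕ Fin t, gblk b := by
    rw [Lagrange.nodal_eq]
    simp only [haa]
    rw [Equiv.prod_comp e (fun z => X - C (pt z)),
      Fintype.prod_sum_type (fun z => (X : F[X]) - C (pt z)),
      Fintype.prod_sum_type gblk]
    congr 1
    · rw [Fintype.prod_prod_type]
      apply Finset.prod_congr rfl
      intro i' _
      have hptl : ∀ k : Fin (r - 1),
          pt (Sum.inl (i', k)) = A ^ (2 * (i' : ℕ) + 1) * β ^ (k : ℕ) := by
        intro k
        simp only [hpt, hE, Sum.elim_inl]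
        rw [pow_add, hβ, ← pow_mul]
      rw [Finset.prod_congr rfl (fun k _ => by rw [hptl k]),
        prod_fin_X_sub_C (by omega) hβprim _ (pow_ne_zero _ hA0)]
      simp only [hgblk, Sum.elim_inl]
      rw [pow_right_comm, ← hγ]
    · rw [Fintype.prod_prod_type]
      apply Finset.prod_congr rfl
      intro j' _
      have hptr : ∀ l : Fin (r + 1),
          pt (Sum.inr (j', l)) = A ^ (2 * (j' : ℕ)) * γ ^ (l : ℕ) := by
        intro l
        simp only [hpt, hE, Sum.elim_inr]
        rw [pow_add, hγ, ← pow_mul]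
      rw [Finset.prod_congr rfl (fun l _ => by rw [hptr l]),
        prod_fin_X_sub_C (by omega) hγprim _ (pow_ne_zero _ hA0)]
      simp only [hgblk, Sum.elim_inr]
      rw [pow_right_comm, ← hβ]
  have hstepA : eval (aa i0) (Polynomial.derivative (Lagrange.nodal univ aa))
      = ∏ j ∈ univ.erase i0, (aa i0 - aa j) := by
    rw [Lagrange.eval_nodal_derivative_eval_node_eq (mem_univ i0), Lagrange.eval_nodal]
  set x0 : F := aa i0 with hx0
  -- main computation, by cases on which block i0 lies in
  have hmain : quadraticChar F (∏ j ∈ univ.erase i0, (aa i0 - aa j)) = 1 := by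
    rw [← hstepA, hnodal]
    rcases hez : e i0 with ⟨i1, k1⟩ | ⟨j1, l1⟩
    · -- left block
      have hx0e : x0 = A ^ ((2 * (i1 : ℕ) + 1) + (r + 1) * (k1 : ℕ)) := by
        rw [hx0]
        simp only [haa, hez, hpt, hE, Sum.elim_inl]
      set E0 : ℕ := (2 * (i1 : ℕ) + 1) + (r + 1) * (k1 : ℕ) with hE0
      obtain ⟨dE, hdE⟩ := hrplus_even (k1 : ℕ)
      have hE0odd : E0 % 2 = 1 := by omega
      have hx0r1 : x0 ^ (r - 1) = γ ^ (2 * (i1 : ℕ) + 1) := by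
        rw [hx0e, ← pow_mul, mul_comm E0 (r - 1), pow_mul, ← hγ, hE0, pow_add, pow_mul,
          hγr1, one_pow, mul_one]
      have hx0r2 : x0 ^ (r + 1) = β ^ (2 * (i1 : ℕ) + 1 + 2 * (k1 : ℕ)) := by
        have hβsq : β ^ (r + 1) = β ^ 2 := by
          rw [show r + 1 = (r - 1) + 2 by omega, pow_add, hβr1, one_mul]
        rw [hx0e, ← pow_mul, mul_comm E0 (r + 1), pow_mul, ← hβ, hE0, pow_add, pow_mul,
          hβsq, ← pow_mul, pow_add, mul_comm 2 (k1 : ℕ), pow_mul, pow_mul]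
        rw [← pow_mul, ← pow_mul]
        congr 1
        ring
      have hvan : eval x0 (gblk (Sum.inl i1)) = 0 := by
        simp only [hgblk, Sum.elim_inl]
        rw [eval_sub, eval_pow, eval_X, eval_C, hx0r1, sub_self]
      have hD : eval x0 (Polynomial.derivative (∏ b : Fin s ⊕ Fin t, gblk b))
          = (∏ b ∈ (univ : Finset (Fin s ⊕ Fin t)).erase (Sum.inl i1), eval x0 (gblk b))
            * eval x0 (Polynomial.derivative (gblk (Sum.inl i1))) := by
        rw [derivative_finset_prod, eval_finset_sum]
        rw [Finset.sum_eq_single_of_mem (Sum.inl i1) (mem_univ _) ?_]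
        · rw [eval_mul, eval_prod]
        · intro b _ hbne
          rw [eval_mul, eval_prod,
            Finset.prod_eq_zero (Finset.mem_erase.mpr ⟨Ne.symm hbne, mem_univ _⟩) hvan,
            zero_mul]
      rw [hD, map_mul]
      -- derivative term
      have hder : eval x0 (Polynomial.derivative (gblk (Sum.inl i1))) = -(x0 ^ (r - 2)) := by
        simp only [hgblk, Sum.elim_inl]
        rw [derivative_sub, derivative_C, sub_zero, derivative_X_pow, eval_mul, eval_C,
          eval_pow, eval_X, Nat.sub_sub]
        have hcast : ((r - 1 : ℕ) : F) = -1 := by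
          rw [Nat.cast_sub (by omega), hrF, Nat.cast_one, zero_sub]
        rw [hcast]
        norm_num
      have hchider : quadraticChar F (eval x0 (Polynomial.derivative (gblk (Sum.inl i1)))) = -1 := by
        rw [hder, show -(x0 ^ (r - 2)) = (-1) * x0 ^ (r - 2) by ring, map_mul, hchi_neg1,
          one_mul, hx0e, ← pow_mul, hchiApow]
        apply Odd.neg_one_pow
        apply Nat.odd_iff.mpr
        rw [Nat.mul_mod, hE0odd]
        have : (r - 2) % 2 = 1 := by omega
        rw [this]
      -- the product over other blocks
      have hchiP : quadraticChar F
          (∏ b ∈ (univ : Finset (Fin s ⊕ Fin t)).erase (Sum.inl i1), eval x0 (gblk b)) = -1 := by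
        rw [prod_erase_sum_inl (fun b => eval x0 (gblk b)) i1, map_mul]
        have hleft : quadraticChar F
            (∏ i' ∈ (univ : Finset (Fin s)).erase i1, eval x0 (gblk (Sum.inl i'))) = -1 := by
          rw [map_prod]
          have hval : ∀ i' ∈ (univ : Finset (Fin s)).erase i1,
              quadraticChar F (eval x0 (gblk (Sum.inl i'))) = -1 := by
            intro i' hi'
            have hii : i' ≠ i1 := (Finset.mem_erase.mp hi').1
            simp only [hgblk, Sum.elim_inl]
            rw [eval_sub, eval_pow, eval_X, eval_C, hx0r1]
            have hneq : γ ^ (2 * (i1 : ℕ) + 1) ≠ γ ^ (2 * (i' : ℕ) + 1) := by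
              intro h
              have := hγprim.pow_inj (by have := hbs i1; omega) (by have := hbs i'; omega) h
              exact hii (Fin.ext (by omega)).symm
            rw [hgdiff _ _ hneq]
            have : ((2 * (i1 : ℕ) + 1) + (2 * (i' : ℕ) + 1)) % 2 = 0 := by omega
            rw [(Nat.even_iff.mpr this).neg_one_pow]
          rw [Finset.prod_congr rfl hval, Finset.prod_const, card_erase_of_mem (mem_univ _),
            card_univ, Fintype.card_fin]
          apply Odd.neg_one_pow
          rcases hse with ⟨c, hc⟩
          exact Nat.odd_iff.mpr (by omega)
        have hright : quadraticChar F (∏ j' : Fin t, eval x0 (gblk (Sum.inr j'))) = 1 := by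
          rw [map_prod]
          apply Finset.prod_eq_one
          intro j' _
          simp only [hgblk, Sum.elim_inr]
          rw [eval_sub, eval_pow, eval_X, eval_C, hx0r2]
          apply hbdiff
          apply hβne
          omega
        rw [hleft, hright]
        norm_num
      rw [hchiP, hchider]
      norm_num
    · -- right block
      have hx0e : x0 = A ^ (2 * (j1 : ℕ) + (r - 1) * (l1 : ℕ)) := by
        rw [hx0]
        simp only [haa, hez, hpt, hE, Sum.elim_inr]
      set E0 : ℕ := 2 * (j1 : ℕ) + (r - 1) * (l1 : ℕ) with hE0
      obtain ⟨dE, hdE⟩ := hrminus_even (l1 : ℕ)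
      have hE0even : E0 % 2 = 0 := by omega
      have hx0r1 : x0 ^ (r - 1) = γ ^ E0 := by
        rw [hx0e, ← pow_mul, mul_comm E0 (r - 1), pow_mul, ← hγ]
      have hx0r2 : x0 ^ (r + 1) = β ^ (2 * (j1 : ℕ)) := by
        have hβl : β ^ ((r - 1) * (l1 : ℕ)) = 1 := by
          rw [pow_mul, hβr1, one_pow]
        rw [hx0e, ← pow_mul, mul_comm E0 (r + 1), pow_mul, ← hβ, hE0, pow_add, hβl, mul_one]
      have hvan : eval x0 (gblk (Sum.inr j1)) = 0 := by
        simp only [hgblk, Sum.elim_inr]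
        rw [eval_sub, eval_pow, eval_X, eval_C, hx0r2, sub_self]
      have hD : eval x0 (Polynomial.derivative (∏ b : Fin s ⊕ Fin t, gblk b))
          = (∏ b ∈ (univ : Finset (Fin s ⊕ Fin t)).erase (Sum.inr j1), eval x0 (gblk b))
            * eval x0 (Polynomial.derivative (gblk (Sum.inr j1))) := by
        rw [derivative_finset_prod, eval_finset_sum]
        rw [Finset.sum_eq_single_of_mem (Sum.inr j1) (mem_univ _) ?_]
        · rw [eval_mul, eval_prod]
        · intro b _ hbne
          rw [eval_mul, eval_prod,
            Finset.prod_eq_zero (Finset.mem_erase.mpr ⟨Ne.symm hbne, mem_univ _⟩) hvan,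
            zero_mul]
      rw [hD, map_mul]
      have hder : eval x0 (Polynomial.derivative (gblk (Sum.inr j1))) = x0 ^ r := by
        simp only [hgblk, Sum.elim_inr]
        rw [derivative_sub, derivative_C, sub_zero, derivative_X_pow, eval_mul, eval_C,
          eval_pow, eval_X, Nat.add_sub_cancel]
        have hcast : ((r + 1 : ℕ) : F) = 1 := by push_cast [hrF]; ring
        rw [hcast, one_mul]
      have hchider : quadraticChar F (eval x0 (Polynomial.derivative (gblk (Sum.inr j1)))) = 1 := by
        rw [hder, hx0e, ← pow_mul, hchiApow]
        apply Even.neg_one_pow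
        apply Nat.even_iff.mpr
        rw [Nat.mul_mod, hE0even]
        norm_num
      have hchiP : quadraticChar F
          (∏ b ∈ (univ : Finset (Fin s ⊕ Fin t)).erase (Sum.inr j1), eval x0 (gblk b)) = 1 := by
        rw [prod_erase_sum_inr (fun b => eval x0 (gblk b)) j1, map_mul]
        have hleft : quadraticChar F (∏ i' : Fin s, eval x0 (gblk (Sum.inl i'))) = 1 := by
          rw [map_prod]
          apply Finset.prod_eq_one
          intro i' _
          simp only [hgblk, Sum.elim_inl]
          rw [eval_sub, eval_pow, eval_X, eval_C, hx0r1]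
          have hneq : γ ^ E0 ≠ γ ^ (2 * (i' : ℕ) + 1) := by
            apply hγne
            omega
          rw [hgdiff _ _ hneq]
          have : (E0 + (2 * (i' : ℕ) + 1)) % 2 = 1 := by omega
          rw [(Nat.odd_iff.mpr this).neg_one_pow]
          norm_num
        have hright : quadraticChar F
            (∏ j' ∈ (univ : Finset (Fin t)).erase j1, eval x0 (gblk (Sum.inr j'))) = 1 := by
          rw [map_prod]
          apply Finset.prod_eq_one
          intro j' hj'
          have hjj : j' ≠ j1 := (Finset.mem_erase.mp hj').1
          simp only [hgblk, Sum.elim_inr]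
          rw [eval_sub, eval_pow, eval_X, eval_C, hx0r2]
          apply hbdiff
          intro h
          have := hβprim.pow_inj (by have := hbt j1; omega) (by have := hbt j'; omega) h
          exact hjj (Fin.ext (by omega)).symm
        rw [hleft, hright, mul_one]
      rw [hchiP, hchider, mul_one]
  have hne0 : (∏ j ∈ univ.erase i0, (aa i0 - aa j)) ≠ 0 := by
    intro h
    rw [h, quadraticChar_zero] at hmain
    exact zero_ne_one hmain
  exact (quadraticChar_one_iff_isSquare hne0).mp hmain


/-- Theorem 1(i).  Let `q = r²` with `r` an odd prime power,
`r ≡ 1 (mod 4)`.  Let `s` be even with `1 ≤ s ≤ (r+1)/2`, let `1 ≤ t ≤ (r-1)/2`, and set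
`n = s(r-1) + t(r+1)`.  Then there exists a `q`-ary `[n, n/2]` MDS Euclidean self-dual code:
a subspace `C ⊆ F^n` of dimension `n/2` with minimum Hamming distance `n/2 + 1` and
`C = C^⊥`. -/
theorem exists_MDS_selfDual_r1mod4 (F : Type*) [Field F] [Fintype F] [DecidableEq F]
    (r : ℕ) (hr : IsPrimePow r) (hrodd : Odd r) (hr1 : r % 4 = 1)
    (hcard : Fintype.card F = r ^ 2)
    (s t : ℕ) (hs1 : 1 ≤ s) (hs2 : s ≤ (r + 1) / 2) (hse : Even s)
    (ht1 : 1 ≤ t) (ht2 : t ≤ (r - 1) / 2) :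
    ∃ C : Submodule F (Fin (s * (r - 1) + t * (r + 1)) → F),
      Module.finrank F C = (s * (r - 1) + t * (r + 1)) / 2 ∧
      IsMinDist C ((s * (r - 1) + t * (r + 1)) / 2 + 1) ∧
      C = dualCode C := by
  classical
  obtain ⟨a, hainj, hasq⟩ :=
    exists_good_points (F := F) r hr hrodd hr1 hcard s t hs1 hs2 hse ht1 ht2
  have hr5 : 5 ≤ r := by
    have h2 := hr.two_le
    omega
  have heven : Even (s * (r - 1) + t * (r + 1)) := by
    rcases hrodd with ⟨c2, hc2⟩
    have he1 : Even (r + 1) := ⟨c2 + 1, by omega⟩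
    exact (hse.mul_right (r - 1)).add (he1.mul_left t)
  have hn2 : 2 ≤ s * (r - 1) + t * (r + 1) := by
    have h1 : 0 < s * (r - 1) := Nat.mul_pos (by omega) (by omega)
    have h2 : 0 < t * (r + 1) := Nat.mul_pos (by omega) (by omega)
    omega
  exact grs_main hn2 heven a hainj hasq
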